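/- arXiv:1207.6698 — 4 statements merged into one kernel-verified Lean document; each statement's English description precedes it below -/
import Mathlib

section
/- Let 𝔠 ∈ J₀ be comparable. If A ∈ J₀ and A ⊊ 𝔠 (A is a proper subset of 𝔠), then g(A) ⊆ 𝔠. -/
/-- A subset `J` of `Z` is a tower if `∅ ∈ J`, `J` is closed under `g`, and
the union of any chain (under inclusion) of elements of `J` belongs to `J`. -/
def IsTower {X : Type*} (Z : Set (Set X)) (g : Set X → Set X)
    (J : Set (Set X)) : Prop :=
  J ⊆ Z ∧ (∅ : Set X) ∈ J ∧ (∀ A ∈ J, g A ∈ J) ∧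
    ∀ 𝒞 : Set (Set X), 𝒞 ⊆ J → IsChain (· ⊆ ·) 𝒞 → ⋃₀ 𝒞 ∈ J

/-- If `𝔠 ∈ J₀` is comparable and `A ∈ J₀` with `A ⊊ 𝔠`, then `g A ⊆ 𝔠`. -/
theorem g_subset_of_ssubset_comparable {X : Type*} (Z : Set (Set X))
    (h1 : (∅ : Set X) ∈ Z)
    (h2 : ∀ A ∈ Z, ∀ B : Set X, B ⊆ A → B ∈ Z)
    (h3 : ∀ 𝒞 : Set (Set X), 𝒞 ⊆ Z → IsChain (· ⊆ ·) 𝒞 → ⋃₀ 𝒞 ∈ Z)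
    (g : Set X → Set X)
    (hg : ∀ A ∈ Z, g A ∈ Z ∧ A ⊆ g A ∧ (g A \ A).Subsingleton)
    (J₀ : Set (Set X)) (hJ₀ : J₀ = ⋂₀ {J : Set (Set X) | IsTower Z g J})
    (𝔠 : Set X) (h𝔠 : 𝔠 ∈ J₀) (hcomp : ∀ A ∈ J₀, A ⊆ 𝔠 ∨ 𝔠 ⊆ A)
    (A : Set X) (hA : A ∈ J₀) (hss : A ⊂ 𝔠) :
    g A ⊆ 𝔠 := by
  -- Z itself is a tower
  have hZtower : IsTower Z g Z :=
    ⟨subset_rfl, h1, fun A hA => (hg A hA).1, fun 𝒞 h𝒞 hchain => h3 𝒞 h𝒞 hchain⟩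
  -- hence J₀ ⊆ Z
  have hJ₀Z : J₀ ⊆ Z := by
    rw [hJ₀]
    exact fun B hB => hB Z hZtower
  -- J₀ is closed under g
  have hgJ₀ : g A ∈ J₀ := by
    rw [hJ₀] at hA ⊢
    intro J hJ
    exact hJ.2.2.1 A (hA J hJ)
  have hAZ : A ∈ Z := hJ₀Z hA
  rcases hcomp (g A) hgJ₀ with h | h
  · exact h
  · -- 𝔠 ⊆ g A; pick x ∈ 𝔠 \ A, then g A ⊆ A ∪ {x} ⊆ 𝔠
    obtain ⟨x, hx𝔠, hxA⟩ := Set.exists_of_ssubset hss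
    have hsub := (hg A hAZ).2.2
    intro y hy
    by_cases hyA : y ∈ A
    · exact hss.1 hyA
    · have : y = x := hsub ⟨hy, hyA⟩ ⟨h hx𝔠, hxA⟩
      exact this ▸ hx𝔠
end

section
/- Let 𝔠 ∈ J₀ be comparable. Then the set U = {B ∈ J₀ : B ⊆ 𝔠 or g(𝔠) ⊆ B} is a tower; consequently U = J₀. -/
/-- If `𝔠 ∈ J₀` is comparable, then `U = {B ∈ J₀ : B ⊆ 𝔠 ∨ g 𝔠 ⊆ B}` is a
tower; consequently `U = J₀`. -/
theorem U_is_tower {X : Type*} (Z : Set (Set X))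
    (h1 : (∅ : Set X) ∈ Z)
    (h2 : ∀ A ∈ Z, ∀ B : Set X, B ⊆ A → B ∈ Z)
    (h3 : ∀ 𝒞 : Set (Set X), 𝒞 ⊆ Z → IsChain (· ⊆ ·) 𝒞 → ⋃₀ 𝒞 ∈ Z)
    (g : Set X → Set X)
    (hg : ∀ A ∈ Z, g A ∈ Z ∧ A ⊆ g A ∧ (g A \ A).Subsingleton)
    (J₀ : Set (Set X)) (hJ₀ : J₀ = ⋂₀ {J : Set (Set X) | IsTower Z g J})
    (𝔠 : Set X) (h𝔠 : 𝔠 ∈ J₀) (hcomp : ∀ A ∈ J₀, A ⊆ 𝔠 ∨ 𝔠 ⊆ A) :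
    IsTower Z g {B ∈ J₀ | B ⊆ 𝔠 ∨ g 𝔠 ⊆ B} ∧
      {B ∈ J₀ | B ⊆ 𝔠 ∨ g 𝔠 ⊆ B} = J₀ := by
  have hZtower : IsTower Z g Z := ⟨subset_rfl, h1, fun A hA => (hg A hA).1, h3⟩
  have hJ₀Z : J₀ ⊆ Z := by
    rw [hJ₀]; exact Set.sInter_subset_of_mem hZtower
  have hJ₀tower : IsTower Z g J₀ := by
    refine ⟨hJ₀Z, ?_, ?_, ?_⟩
    · rw [hJ₀]; exact Set.mem_sInter.mpr fun J hJ => hJ.2.1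
    · intro A hA
      rw [hJ₀] at hA ⊢
      exact Set.mem_sInter.mpr fun J hJ => hJ.2.2.1 A (Set.mem_sInter.mp hA J hJ)
    · intro 𝒞 h𝒞 hchain
      rw [hJ₀]
      exact Set.mem_sInter.mpr fun J hJ =>
        hJ.2.2.2 𝒞 (fun B hB => Set.mem_sInter.mp (hJ₀ ▸ h𝒞 hB) J hJ) hchain
  have hU : IsTower Z g {B ∈ J₀ | B ⊆ 𝔠 ∨ g 𝔠 ⊆ B} := by
    refine ⟨fun B hB => hJ₀Z hB.1, ⟨hJ₀tower.2.1, Or.inl (Set.empty_subset _)⟩, ?_, ?_⟩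
    · rintro B ⟨hBJ, hBc⟩
      have hgB : g B ∈ J₀ := hJ₀tower.2.2.1 B hBJ
      refine ⟨hgB, ?_⟩
      rcases hBc with h | h
      · rcases hcomp (g B) hgB with h' | h'
        · exact Or.inl h'
        · by_cases hBc' : B = 𝔠
          · subst hBc'; exact Or.inr subset_rfl
          · -- B ⊊ 𝔠, so pick y ∈ 𝔠 \ B; then g B ⊆ 𝔠
            have hBlt : B ⊂ 𝔠 := h.ssubset_of_ne hBc'
            obtain ⟨y, hy𝔠, hyB⟩ := Set.exists_of_ssubset hBlt
            have hsub := (hg B (hJ₀Z hBJ)).2.2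
            refine Or.inl fun x hx => ?_
            by_contra hx𝔠
            have hxy : x ≠ y := fun e => hx𝔠 (e ▸ hy𝔠)
            exact hxy (hsub ⟨hx, fun hxB => hx𝔠 (h hxB)⟩ ⟨h' hy𝔠, hyB⟩)
      · exact Or.inr (h.trans (hg B (hJ₀Z hBJ)).2.1)
    · intro 𝒞 h𝒞 hchain
      refine ⟨hJ₀tower.2.2.2 𝒞 (fun B hB => (h𝒞 hB).1) hchain, ?_⟩
      by_cases hall : ∀ B ∈ 𝒞, B ⊆ 𝔠
      · exact Or.inl (Set.sUnion_subset hall)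
      · push_neg at hall
        obtain ⟨B, hB𝒞, hB⟩ := hall
        have : g 𝔠 ⊆ B := (h𝒞 hB𝒞).2.resolve_left hB
        exact Or.inr (this.trans (Set.subset_sUnion_of_mem hB𝒞))
  refine ⟨hU, Set.Subset.antisymm (fun B hB => hB.1) fun B hB => ?_⟩
  rw [hJ₀] at hB
  exact Set.sInter_subset_of_mem hU hB
end

section
/- If 𝔠 ∈ J₀ is comparable, then g(𝔠) is comparable, i.e., for every A ∈ J₀, either A ⊆ g(𝔠) or g(𝔠) ⊆ A. -/
/-- If `𝔠 ∈ J₀` is comparable, then `g 𝔠` is comparable. -/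
theorem g_comparable {X : Type*} (Z : Set (Set X))
    (h1 : (∅ : Set X) ∈ Z)
    (h2 : ∀ A ∈ Z, ∀ B : Set X, B ⊆ A → B ∈ Z)
    (h3 : ∀ 𝒞 : Set (Set X), 𝒞 ⊆ Z → IsChain (· ⊆ ·) 𝒞 → ⋃₀ 𝒞 ∈ Z)
    (g : Set X → Set X)
    (hg : ∀ A ∈ Z, g A ∈ Z ∧ A ⊆ g A ∧ (g A \ A).Subsingleton)
    (J₀ : Set (Set X)) (hJ₀ : J₀ = ⋂₀ {J : Set (Set X) | IsTower Z g J})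
    (𝔠 : Set X) (h𝔠 : 𝔠 ∈ J₀) (hcomp : ∀ A ∈ J₀, A ⊆ 𝔠 ∨ 𝔠 ⊆ A) :
    ∀ A ∈ J₀, A ⊆ g 𝔠 ∨ g 𝔠 ⊆ A := by
  have hZtower : IsTower Z g Z := ⟨subset_rfl, h1, fun A hA => (hg A hA).1, h3⟩
  -- J₀ is a tower
  have hmem : ∀ A, A ∈ J₀ ↔ ∀ J, IsTower Z g J → A ∈ J := by
    intro A
    rw [hJ₀, Set.mem_sInter]
    exact ⟨fun h J hJ => h J hJ, fun h J hJ => h J hJ⟩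
  have hJ₀Z : J₀ ⊆ Z := fun A hA => (hmem A).1 hA Z hZtower
  have hJ₀tower : IsTower Z g J₀ := by
    refine ⟨hJ₀Z, ?_, ?_, ?_⟩
    · exact (hmem ∅).2 fun J hJ => hJ.2.1
    · intro A hA
      exact (hmem (g A)).2 fun J hJ => hJ.2.2.1 A ((hmem A).1 hA J hJ)
    · intro 𝒞 h𝒞 hchain
      exact (hmem _).2 fun J hJ =>
        hJ.2.2.2 𝒞 (fun A hA => (hmem A).1 (h𝒞 hA) J hJ) hchain
  -- The set U
  set U : Set (Set X) := {A ∈ J₀ | A ⊆ 𝔠 ∨ g 𝔠 ⊆ A} with hU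
  have hc𝔠 : 𝔠 ⊆ g 𝔠 := (hg 𝔠 (hJ₀Z h𝔠)).2.1
  have hUtower : IsTower Z g U := by
    refine ⟨fun A hA => hJ₀Z hA.1, ⟨hJ₀tower.2.1, Or.inl (Set.empty_subset _)⟩, ?_, ?_⟩
    · rintro A ⟨hAJ, hAc⟩
      have hgAJ : g A ∈ J₀ := hJ₀tower.2.2.1 A hAJ
      refine ⟨hgAJ, ?_⟩
      rcases hAc with hAc | hcA
      · rcases hcomp (g A) hgAJ with h | h
        · exact Or.inl h
        · -- 𝔠 ⊆ g A and A ⊆ 𝔠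
          rcases eq_or_ssubset_of_subset hAc with rfl | hss
          · exact Or.inr subset_rfl
          · -- A ⊊ 𝔠, pick x ∈ 𝔠 \ A
            obtain ⟨x, hx𝔠, hxA⟩ := Set.exists_of_ssubset hss
            have hsub := (hg A (hJ₀Z hAJ)).2.2
            left
            intro y hy
            by_cases hyA : y ∈ A
            · exact hAc hyA
            · have : y = x := hsub ⟨hy, hyA⟩ ⟨h hx𝔠, hxA⟩
              exact this ▸ hx𝔠
      · exact Or.inr (hcA.trans (hg A (hJ₀Z hAJ)).2.1)
    · intro 𝒞 h𝒞 hchain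
      have hUJ : ⋃₀ 𝒞 ∈ J₀ := hJ₀tower.2.2.2 𝒞 (fun A hA => (h𝒞 hA).1) hchain
      refine ⟨hUJ, ?_⟩
      by_cases h : ∀ A ∈ 𝒞, A ⊆ 𝔠
      · exact Or.inl (Set.sUnion_subset h)
      · push_neg at h
        obtain ⟨A, hA𝒞, hA⟩ := h
        rcases (h𝒞 hA𝒞).2 with h' | h'
        · exact absurd h' hA
        · exact Or.inr (h'.trans (Set.subset_sUnion_of_mem hA𝒞))
  have hJ₀U : J₀ ⊆ U := by
    rw [hJ₀]
    exact Set.sInter_subset_of_mem hUtower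
  intro A hA
  rcases (hJ₀U hA).2 with h | h
  · exact Or.inl (h.trans hc𝔠)
  · exact Or.inr h
end

section
/- J₀ is a chain: any two elements of J₀ are comparable under inclusion, i.e., for all A, B ∈ J₀, either A ⊆ B or B ⊆ A. -/
/-- `J₀` is a chain: any two elements of `J₀` are comparable under
inclusion. -/
theorem J0_is_chain {X : Type*} (Z : Set (Set X))
    (h1 : (∅ : Set X) ∈ Z)
    (h2 : ∀ A ∈ Z, ∀ B : Set X, B ⊆ A → B ∈ Z)
    (h3 : ∀ 𝒞 : Set (Set X), 𝒞 ⊆ Z → IsChain (· ⊆ ·) 𝒞 → ⋃₀ 𝒞 ∈ Z)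
    (g : Set X → Set X)
    (hg : ∀ A ∈ Z, g A ∈ Z ∧ A ⊆ g A ∧ (g A \ A).Subsingleton)
    (J₀ : Set (Set X)) (hJ₀ : J₀ = ⋂₀ {J : Set (Set X) | IsTower Z g J}) :
    ∀ A ∈ J₀, ∀ B ∈ J₀, A ⊆ B ∨ B ⊆ A := by
  subst hJ₀
  set T : Set (Set (Set X)) := {J : Set (Set X) | IsTower Z g J} with hT
  have hZT : Z ∈ T := ⟨subset_rfl, h1, fun A hA => (hg A hA).1, h3⟩
  have hmem : ∀ J ∈ T, ⋂₀ T ⊆ J := fun J hJ => Set.sInter_subset_of_mem hJ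
  have hJ₀T : ⋂₀ T ∈ T := by
    refine ⟨(hmem Z hZT).trans subset_rfl, ?_, ?_, ?_⟩
    · exact Set.mem_sInter.2 fun J hJ => hJ.2.1
    · intro A hA
      exact Set.mem_sInter.2 fun J hJ => hJ.2.2.1 A (Set.mem_sInter.1 hA J hJ)
    · intro 𝒞 h𝒞 hch
      exact Set.mem_sInter.2 fun J hJ =>
        hJ.2.2.2 𝒞 (fun A hA => Set.mem_sInter.1 (h𝒞 hA) J hJ) hch
  have hZsub : ∀ A ∈ ⋂₀ T, A ∈ Z := fun A hA => hJ₀T.1 hA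
  -- key lemma: if C is comparable then every A ∈ J₀ satisfies A ⊆ C ∨ g C ⊆ A
  have key : ∀ C ∈ ⋂₀ T, (∀ A ∈ ⋂₀ T, A ⊆ C ∨ C ⊆ A) →
      ∀ A ∈ ⋂₀ T, A ⊆ C ∨ g C ⊆ A := by
    intro C hC hcomp
    have hS : {A | A ∈ ⋂₀ T ∧ (A ⊆ C ∨ g C ⊆ A)} ∈ T := by
      refine ⟨fun A hA => hZsub A hA.1, ⟨hJ₀T.2.1, Or.inl (Set.empty_subset C)⟩,
        ?_, ?_⟩
      · rintro A ⟨hAJ, hAC⟩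
        have hgAJ : g A ∈ ⋂₀ T := hJ₀T.2.2.1 A hAJ
        refine ⟨hgAJ, ?_⟩
        rcases hAC with hAC | hCA
        · rcases hcomp (g A) hgAJ with hgAC | hCgA
          · exact Or.inl hgAC
          · -- A ⊆ C ⊆ g A, and g A \ A subsingleton
            by_cases hAeq : A = C
            · exact Or.inr (hAeq ▸ subset_rfl)
            · -- C ≠ A, so ∃ x ∈ C \ A; show g A ⊆ C
              have hss : C \ A ≠ ∅ := by
                intro h
                exact hAeq (Set.Subset.antisymm hAC
                  (fun x hx => by_contra fun hxA =>
                    Set.eq_empty_iff_forall_notMem.1 h x ⟨hx, hxA⟩))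
              obtain ⟨x, hxC, hxA⟩ := Set.nonempty_iff_ne_empty.2 hss
              have hsub : g A ⊆ C := by
                intro y hy
                by_cases hyA : y ∈ A
                · exact hAC hyA
                · have : y = x := (hg A (hZsub A hAJ)).2.2 ⟨hy, hyA⟩ ⟨hCgA hxC, hxA⟩
                  exact this ▸ hxC
              exact Or.inl hsub
        · exact Or.inr (hCA.trans ((hg A (hZsub A hAJ)).2.1))
      · intro 𝒞 h𝒞 hch
        have hU : ⋃₀ 𝒞 ∈ ⋂₀ T := hJ₀T.2.2.2 𝒞 (fun A hA => (h𝒞 hA).1) hch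
        refine ⟨hU, ?_⟩
        by_cases h : ∀ A ∈ 𝒞, A ⊆ C
        · exact Or.inl (Set.sUnion_subset h)
        · push_neg at h
          obtain ⟨A, hA𝒞, hAC⟩ := h
          rcases (h𝒞 hA𝒞).2 with h' | h'
          · exact absurd h' hAC
          · exact Or.inr (h'.trans (Set.subset_sUnion_of_mem hA𝒞))
    intro A hA
    exact (hmem _ hS hA).2
  -- comparable sets form a tower
  have hComp : {C | C ∈ ⋂₀ T ∧ ∀ A ∈ ⋂₀ T, A ⊆ C ∨ C ⊆ A} ∈ T := by
    refine ⟨fun C hC => hZsub C hC.1,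
      ⟨hJ₀T.2.1, fun A _ => Or.inr (Set.empty_subset A)⟩, ?_, ?_⟩
    · rintro C ⟨hCJ, hCcomp⟩
      have hgC : g C ∈ ⋂₀ T := hJ₀T.2.2.1 C hCJ
      refine ⟨hgC, fun A hA => ?_⟩
      rcases key C hCJ hCcomp A hA with h | h
      · exact Or.inl (h.trans (hg C (hZsub C hCJ)).2.1)
      · exact Or.inr h
    · intro 𝒞 h𝒞 hch
      have hU : ⋃₀ 𝒞 ∈ ⋂₀ T := hJ₀T.2.2.2 𝒞 (fun A hA => (h𝒞 hA).1) hch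
      refine ⟨hU, fun A hA => ?_⟩
      by_cases h : ∃ C ∈ 𝒞, A ⊆ C
      · obtain ⟨C, hC𝒞, hAC⟩ := h
        exact Or.inl (hAC.trans (Set.subset_sUnion_of_mem hC𝒞))
      · push_neg at h
        refine Or.inr (Set.sUnion_subset fun C hC𝒞 => ?_)
        rcases (h𝒞 hC𝒞).2 A hA with h' | h'
        · exact absurd h' (h C hC𝒞)
        · exact h'
  intro A hA B hB
  rcases (hmem _ hComp hA).2 B hB with h | h
  · exact Or.inr h
  · exact Or.inl h
end
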